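/- For k ≥ 6, the Gallai-Ramsey multiplicity GM_k(K_3 : 2K_2) equals 3; that is, every exact k-edge-coloring of K_{k+3} contains, in total, at least 3 rainbow triangles plus monochromatic 2-matchings, and this is attained. -/

import Mathlib

open SimpleGraph Function

namespace GR

/-- The set of copies of a graph `H` (assumed without isolated vertices, so a copy is
identified with its edge set) inside the complete graph on `Fin n`. -/
def copies {α : Type} (H : SimpleGraph α) (n : ℕ) : Set (Set (Sym2 (Fin n))) :=
  {S | ∃ f : α → Fin n, Function.Injective f ∧ S = (Sym2.map f) '' H.edgeSet}

/-- `S` is a monochromatic copy of `H` under the edge-coloring `c`. -/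
def IsMonoCopy {α C : Type} (H : SimpleGraph α) {n : ℕ}
    (c : Sym2 (Fin n) → C) (S : Set (Sym2 (Fin n))) : Prop :=
  S ∈ copies H n ∧ ∃ col, ∀ e ∈ S, c e = col

/-- `S` is a rainbow copy of `G` under the edge-coloring `c`. -/
def IsRainbowCopy {α C : Type} (G : SimpleGraph α) {n : ℕ}
    (c : Sym2 (Fin n) → C) (S : Set (Sym2 (Fin n))) : Prop :=
  S ∈ copies G n ∧ Set.InjOn c S

def HasMonoCopy {α C : Type} (H : SimpleGraph α) {n : ℕ} (c : Sym2 (Fin n) → C) : Prop :=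
  ∃ S, IsMonoCopy H c S

def HasRainbowCopy {α C : Type} (G : SimpleGraph α) {n : ℕ} (c : Sym2 (Fin n) → C) : Prop :=
  ∃ S, IsRainbowCopy G c S

/-- The `k`-colored Gallai-Ramsey number `gr_k(G : H)`. -/
noncomputable def gr {α β : Type} (k : ℕ) (G : SimpleGraph α) (H : SimpleGraph β) : ℕ :=
  sInf {n | ∀ c : Sym2 (Fin n) → Fin k, HasRainbowCopy G c ∨ HasMonoCopy H c}

/-- The diagonal `k`-colored Ramsey number `r_k(H)`. -/
noncomputable def ramsey {β : Type} (k : ℕ) (H : SimpleGraph β) : ℕ :=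
  sInf {n | ∀ c : Sym2 (Fin n) → Fin k, HasMonoCopy H c}

/-- The matching with `n` edges, `nK₂`. -/
def nK2 (n : ℕ) : SimpleGraph (Fin n × Fin 2) :=
  SimpleGraph.fromRel (fun a b => a.1 = b.1)

/-- The path on 5 vertices. -/
def P5 : SimpleGraph (Fin 5) := SimpleGraph.pathGraph 5

/-- The star with three leaves. -/
def K13 : SimpleGraph (Fin 1 ⊕ Fin 3) := completeBipartiteGraph (Fin 1) (Fin 3)

/-- The triangle. -/
def K3 : SimpleGraph (Fin 3) := completeGraph (Fin 3)

/-- Number of monochromatic copies of `H` under the coloring `c`. -/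
noncomputable def monoCopyCount {α C : Type} (H : SimpleGraph α) {n : ℕ}
    (c : Sym2 (Fin n) → C) : ℕ :=
  Set.ncard {S | IsMonoCopy H c S}

/-- Number of rainbow copies of `G` under the coloring `c`. -/
noncomputable def rainbowCopyCount {α C : Type} (G : SimpleGraph α) {n : ℕ}
    (c : Sym2 (Fin n) → C) : ℕ :=
  Set.ncard {S | IsRainbowCopy G c S}

/-- The Gallai-Ramsey multiplicity: the minimum, over exact `k`-colorings of the complete
graph on `gr_k(G:H)` vertices, of the number of rainbow copies of `G` plus the number of
monochromatic copies of `H`. -/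
noncomputable def GM {α β : Type} (k : ℕ) (G : SimpleGraph α) (H : SimpleGraph β) : ℕ :=
  sInf {t | ∃ c : Sym2 (Fin (gr k G H)) → Fin k, Surjective c ∧
    t = rainbowCopyCount G c + monoCopyCount H c}


lemma nK2_edgeSet : (nK2 2).edgeSet = {s(((0:Fin 2),(0:Fin 2)), ((0:Fin 2),(1:Fin 2))),
    s(((1:Fin 2),(0:Fin 2)), ((1:Fin 2),(1:Fin 2)))} := by
  ext e
  induction e with
  | _ x y =>
    simp only [mem_edgeSet, nK2, fromRel_adj, Set.mem_insert_iff, Set.mem_singleton_iff]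
    revert x y; decide

lemma K3_edgeSet : K3.edgeSet = {s((0:Fin 3),(1:Fin 3)), s((0:Fin 3),(2:Fin 3)),
    s((1:Fin 3),(2:Fin 3))} := by
  ext e
  induction e with
  | _ x y =>
    simp only [mem_edgeSet, K3, completeGraph, top_adj, Set.mem_insert_iff, Set.mem_singleton_iff]
    revert x y; decide

lemma mono_iff {n : ℕ} {C : Type} (c : Sym2 (Fin n) → C) (S : Set (Sym2 (Fin n))) :
    IsMonoCopy (nK2 2) c S ↔ ∃ a b a' b' : Fin n, a ≠ b ∧ a' ≠ b' ∧ a ≠ a' ∧ a ≠ b' ∧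
      b ≠ a' ∧ b ≠ b' ∧ c s(a,b) = c s(a',b') ∧ S = {s(a,b), s(a',b')} := by
  constructor
  · rintro ⟨⟨f, hf, rfl⟩, col, hcol⟩
    have hm1 : s(f (0,0), f (0,1)) ∈ Sym2.map f '' (nK2 2).edgeSet :=
      ⟨s(((0:Fin 2),(0:Fin 2)), ((0:Fin 2),(1:Fin 2))), by rw [nK2_edgeSet]; simp, by simp⟩
    have hm2 : s(f (1,0), f (1,1)) ∈ Sym2.map f '' (nK2 2).edgeSet :=
      ⟨s(((1:Fin 2),(0:Fin 2)), ((1:Fin 2),(1:Fin 2))), by rw [nK2_edgeSet]; simp, by simp⟩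
    refine ⟨f (0,0), f (0,1), f (1,0), f (1,1),
      fun h => absurd (hf h) (by decide), fun h => absurd (hf h) (by decide),
      fun h => absurd (hf h) (by decide), fun h => absurd (hf h) (by decide),
      fun h => absurd (hf h) (by decide), fun h => absurd (hf h) (by decide), ?_, ?_⟩
    · rw [hcol _ hm1, hcol _ hm2]
    · rw [nK2_edgeSet, Set.image_insert_eq, Set.image_singleton]
      simp
  · rintro ⟨a, b, a', b', hab, hab', h1, h2, h3, h4, hc, rfl⟩
    refine ⟨⟨fun p => ![![a,b],![a',b']] p.1 p.2, ?_, ?_⟩, c s(a,b), ?_⟩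
    · rintro ⟨x1,x2⟩ ⟨y1,y2⟩ h
      fin_cases x1 <;> fin_cases x2 <;> fin_cases y1 <;> fin_cases y2 <;> simp_all
    · rw [nK2_edgeSet, Set.image_insert_eq, Set.image_singleton]
      simp
    · rintro e (rfl | he)
      · rfl
      · rw [Set.mem_singleton_iff] at he; subst he; exact hc.symm

lemma rainbow_elim {n : ℕ} {C : Type} {c : Sym2 (Fin n) → C} {S : Set (Sym2 (Fin n))}
    (h : IsRainbowCopy K3 c S) : ∃ a b d : Fin n, a ≠ b ∧ a ≠ d ∧ b ≠ d ∧
      S = {s(a,b), s(a,d), s(b,d)} := by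
  obtain ⟨⟨f, hf, rfl⟩, -⟩ := h
  refine ⟨f 0, f 1, f 2, fun h => by simpa using hf h, fun h => by simpa using hf h,
    fun h => by simpa using hf h, ?_⟩
  rw [K3_edgeSet, Set.image_insert_eq, Set.image_insert_eq, Set.image_singleton]
  simp


set_option maxHeartbeats 1000000 in
theorem pair_classify (k : ℕ) (hk : 6 ≤ k) (a b a' b' w0 w1 w2 w3 : Fin (k+3))
    (e0 : w0.1 = k-1) (e1 : w1.1 = k) (e2 : w2.1 = k+1) (e3 : w3.1 = k+2)
    (hcv : min (min a.1 b.1) (k-1) = min (min a'.1 b'.1) (k-1))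
    (n1 : a.1 ≠ b.1) (n2 : a'.1 ≠ b'.1) (n3 : a.1 ≠ a'.1) (n4 : a.1 ≠ b'.1)
    (n5 : b.1 ≠ a'.1) (n6 : b.1 ≠ b'.1) :
    ({s(a,b), s(a',b')} : Set (Sym2 (Fin (k+3)))) = {s(w0,w1), s(w2,w3)} ∨
    ({s(a,b), s(a',b')} : Set (Sym2 (Fin (k+3)))) = {s(w0,w2), s(w1,w3)} ∨
    ({s(a,b), s(a',b')} : Set (Sym2 (Fin (k+3)))) = {s(w0,w3), s(w1,w2)} := by
  have ba := a.2; have bb := b.2; have ba' := a'.2; have bb' := b'.2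
  have h1 : (a.1 = k-1 ∨ a.1 = k ∨ a.1 = k+1 ∨ a.1 = k+2) ∧
      (b.1 = k-1 ∨ b.1 = k ∨ b.1 = k+1 ∨ b.1 = k+2) ∧
      (a'.1 = k-1 ∨ a'.1 = k ∨ a'.1 = k+1 ∨ a'.1 = k+2) ∧
      (b'.1 = k-1 ∨ b'.1 = k ∨ b'.1 = k+1 ∨ b'.1 = k+2) := by omega
  clear hcv ba bb ba' bb'
  obtain ⟨ha|ha|ha|ha, hb|hb|hb|hb, hc'|hc'|hc'|hc', hd|hd|hd|hd⟩ := h1 <;>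
  first
    | omega
    | (simp only [Set.pair_eq_pair_iff, Sym2.eq_iff, Fin.ext_iff];
       simp only [ha, hb, hc', hd, e0, e1, e2, e3];
       simp [show ¬(k = k-1) from by omega, show ¬(k-1 = k) from by omega,
         show ¬(k-1 = k+1) from by omega, show ¬(k+1 = k-1) from by omega,
         show ¬(k-1 = k+2) from by omega, show ¬(k+2 = k-1) from by omega,
         show ¬(k = k+1) from by omega, show ¬(k+1 = k) from by omega,
         show ¬(k = k+2) from by omega, show ¬(k+2 = k) from by omega,
         show ¬(k+1 = k+2) from by omega, show ¬(k+2 = k+1) from by omega])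

def fcol (k m : ℕ) (hk : 0 < k) : Sym2 (Fin m) → Fin k := fun e =>
  ⟨Sym2.lift ⟨fun a b => min (min a.1 b.1) (k-1), fun a b => by simp [min_comm a.1 b.1]⟩ e,
   lt_of_le_of_lt (by induction e using Sym2.inductionOn with
     | _ x y => exact min_le_right _ _) (by omega)⟩
lemma fcol_mk {k m : ℕ} (hk : 0 < k) (a b : Fin m) :
    (fcol k m hk s(a,b)).1 = min (min a.1 b.1) (k-1) := rfl

lemma constr_no_rainbow (k m : ℕ) (hk : 0 < k) (S : Set (Sym2 (Fin m))) :
    ¬ IsRainbowCopy K3 (fcol k m hk) S := by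
  intro h
  obtain ⟨a, b, d, hab, had, hbd, rfl⟩ := rainbow_elim h
  have hinj := h.2
  have nab : a.1 ≠ b.1 := fun h => hab (Fin.ext h)
  have nad : a.1 ≠ d.1 := fun h => had (Fin.ext h)
  have nbd : b.1 ≠ d.1 := fun h => hbd (Fin.ext h)
  by_cases c1 : a.1 ≤ b.1 ∧ a.1 ≤ d.1
  · have he : fcol k m hk s(a,b) = fcol k m hk s(a,d) := Fin.ext (by
      rw [fcol_mk, fcol_mk]; omega)
    have := hinj (by simp : s(a,b) ∈ _) (by simp : s(a,d) ∈ _) he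
    rw [Sym2.eq_iff] at this
    tauto
  · by_cases c2 : b.1 ≤ a.1 ∧ b.1 ≤ d.1
    · have he : fcol k m hk s(a,b) = fcol k m hk s(b,d) := Fin.ext (by
        rw [fcol_mk, fcol_mk]; omega)
      have := hinj (by simp : s(a,b) ∈ _) (by simp : s(b,d) ∈ _) he
      rw [Sym2.eq_iff] at this
      tauto
    · have he : fcol k m hk s(a,d) = fcol k m hk s(b,d) := Fin.ext (by
        rw [fcol_mk, fcol_mk]; omega)
      have := hinj (by simp : s(a,d) ∈ _) (by simp : s(b,d) ∈ _) he
      rw [Sym2.eq_iff] at this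
      tauto

lemma constr_no_mono (k m : ℕ) (hk : 0 < k) (hm : m ≤ k + 2) (S : Set (Sym2 (Fin m))) :
    ¬ IsMonoCopy (nK2 2) (fcol k m hk) S := by
  intro h
  rw [mono_iff] at h
  obtain ⟨a, b, a', b', h1, h2, h3, h4, h5, h6, hc, rfl⟩ := h
  have hcv : min (min a.1 b.1) (k-1) = min (min a'.1 b'.1) (k-1) := by
    rw [← fcol_mk hk, ← fcol_mk hk, hc]
  have n1 : a.1 ≠ b.1 := fun h => h1 (Fin.ext h)
  have n2 : a'.1 ≠ b'.1 := fun h => h2 (Fin.ext h)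
  have n3 : a.1 ≠ a'.1 := fun h => h3 (Fin.ext h)
  have n4 : a.1 ≠ b'.1 := fun h => h4 (Fin.ext h)
  have n5 : b.1 ≠ a'.1 := fun h => h5 (Fin.ext h)
  have n6 : b.1 ≠ b'.1 := fun h => h6 (Fin.ext h)
  have := a.2; have := b.2; have := a'.2; have := b'.2
  omega


theorem mono_ge_three (k : ℕ) (c : Sym2 (Fin (k+3)) → Fin k) :
    3 ≤ Set.ncard {S | IsMonoCopy (nK2 2) c S} := by
  classical
  by_contra hcon
  push_neg at hcon
  set M := {S | IsMonoCopy (nK2 2) c S} with hM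
  have hMfin : M.Finite := Set.toFinite _
  -- the "deleted" edges: one from each mono copy
  set pick : Set (Sym2 (Fin (k+3))) → Sym2 (Fin (k+3)) :=
    fun S => if h : ∃ e, e ∈ S then h.choose else s(⟨0, by omega⟩, ⟨0, by omega⟩) with hpick
  set D : Finset (Sym2 (Fin (k+3))) := hMfin.toFinset.image pick with hD
  have hDcard : D.card ≤ 2 := by
    refine le_trans Finset.card_image_le ?_
    rw [← Set.ncard_eq_toFinset_card M hMfin]
    omega
  have hDkey : ∀ a b a' b' : Fin (k+3), a ≠ b → a' ≠ b' → a ≠ a' → a ≠ b' → b ≠ a' →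
      b ≠ b' → c s(a,b) = c s(a',b') → s(a,b) ∈ D ∨ s(a',b') ∈ D := by
    intro a b a' b' h1 h2 h3 h4 h5 h6 hc
    have hm : ({s(a,b), s(a',b')} : Set (Sym2 (Fin (k+3)))) ∈ M :=
      (mono_iff c _).2 ⟨a, b, a', b', h1, h2, h3, h4, h5, h6, hc, rfl⟩
    have hex : ∃ e, e ∈ ({s(a,b), s(a',b')} : Set (Sym2 (Fin (k+3)))) :=
      ⟨s(a,b), Set.mem_insert _ _⟩
    have hp : pick {s(a,b), s(a',b')} ∈ ({s(a,b), s(a',b')} : Set (Sym2 (Fin (k+3)))) := by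
      rw [hpick]; simp only [dif_pos hex]; exact hex.choose_spec
    have hpD : pick {s(a,b), s(a',b')} ∈ D :=
      Finset.mem_image_of_mem pick (hMfin.mem_toFinset.2 hm)
    rcases hp with hp | hp
    · exact Or.inl (hp ▸ hpD)
    · exact Or.inr (Set.mem_singleton_iff.1 hp ▸ hpD)
  -- color classes minus D
  set Ei : Fin k → Finset (Sym2 (Fin (k+3))) :=
    fun i => Finset.univ.filter (fun e => c e = i ∧ ¬ e.IsDiag ∧ e ∉ D) with hEi
  have hEimem : ∀ i e, e ∈ Ei i ↔ c e = i ∧ ¬ e.IsDiag ∧ e ∉ D := by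
    intro i e; rw [hEi]; simp
  have hint : ∀ i, ∀ e ∈ Ei i, ∀ f ∈ Ei i, ∃ v, v ∈ e ∧ v ∈ f := by
    intro i e he f hf
    by_contra hno
    push_neg at hno
    induction e using Sym2.inductionOn with
    | _ a b =>
    induction f using Sym2.inductionOn with
    | _ a' b' =>
    rw [hEimem] at he hf
    obtain ⟨hce, hde, hDe⟩ := he
    obtain ⟨hcf, hdf, hDf⟩ := hf
    rw [Sym2.mk_isDiag_iff] at hde hdf
    have m1 : a ∈ s(a,b) := Sym2.mem_mk_left a b
    have m2 : b ∈ s(a,b) := Sym2.mem_mk_right a b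
    have m3 := hno a m1
    have m4 := hno b m2
    rw [Sym2.mem_iff] at m3 m4
    push_neg at m3 m4
    rcases hDkey a b a' b' hde hdf m3.1 m3.2 m4.1 m4.2 (hce.trans hcf.symm) with h | h
    · exact hDe h
    · exact hDf h
  -- classification of color classes
  have hclass : ∀ i : Fin k, (∃ v, ∀ e ∈ Ei i, v ∈ e) ∨
      (∃ V : Finset (Fin (k+3)), V.card ≤ 3 ∧ ∀ e ∈ Ei i, ∀ v, v ∈ e → v ∈ V) := by
    intro i
    by_cases hstar : ∃ v, ∀ e ∈ Ei i, v ∈ e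
    · exact Or.inl hstar
    right
    push_neg at hstar
    obtain ⟨e1, he1, -⟩ := hstar ⟨0, by omega⟩
    induction e1 using Sym2.inductionOn with
    | _ a b =>
    have hab : a ≠ b := by
      have := ((hEimem i _).1 he1).2.1; rwa [Sym2.mk_isDiag_iff] at this
    obtain ⟨ea, hea, hnea⟩ := hstar a
    obtain ⟨eb, heb, hneb⟩ := hstar b
    -- ea meets s(a,b), a ∉ ea, so b ∈ ea
    obtain ⟨u, hu1, hu2⟩ := hint i ea hea s(a,b) he1
    rw [Sym2.mem_iff] at hu2
    have hbea : b ∈ ea := by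
      rcases hu2 with rfl | rfl
      · exact absurd hu1 hnea
      · exact hu1
    obtain ⟨d, rfl⟩ := Sym2.mem_iff_exists.1 hbea
    have hd1 : d ≠ a := fun h => hnea (h ▸ Sym2.mem_mk_right b d)
    have hd2 : d ≠ b := by
      have := ((hEimem i _).1 hea).2.1; rw [Sym2.mk_isDiag_iff] at this
      exact fun h => this (h ▸ rfl)
    -- eb meets s(a,b) and s(b,d); b ∉ eb, so a ∈ eb and d ∈ eb
    obtain ⟨u2, hu21, hu22⟩ := hint i eb heb s(a,b) he1
    rw [Sym2.mem_iff] at hu22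
    have haeb : a ∈ eb := by
      rcases hu22 with rfl | rfl
      · exact hu21
      · exact absurd hu21 hneb
    obtain ⟨u3, hu31, hu32⟩ := hint i eb heb s(b,d) hea
    rw [Sym2.mem_iff] at hu32
    have hdeb : d ∈ eb := by
      rcases hu32 with rfl | rfl
      · exact absurd hu31 hneb
      · exact hu31
    refine ⟨{a, b, d}, ?_, ?_⟩
    · exact le_trans (Finset.card_insert_le _ _)
        (by have := Finset.card_insert_le b ({d} : Finset (Fin (k+3))); rw [Finset.card_singleton] at this; omega)
    intro e he v hv
    by_contra hvV
    simp only [Finset.mem_insert, Finset.mem_singleton] at hvV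
    push_neg at hvV
    obtain ⟨hva, hvb, hvd⟩ := hvV
    obtain ⟨w, rfl⟩ := Sym2.mem_iff_exists.1 hv
    -- e = s(v,w) meets s(a,b), s(b,d), eb (which contains a and d)
    obtain ⟨x1, hx11, hx12⟩ := hint i s(v,w) he s(a,b) he1
    obtain ⟨x2, hx21, hx22⟩ := hint i s(v,w) he s(b,d) hea
    obtain ⟨x3, hx31, hx32⟩ := hint i s(v,w) he eb heb
    rw [Sym2.mem_iff] at hx11 hx12 hx21 hx22 hx31
    have hw1 : w = a ∨ w = b := by
      rcases hx11 with rfl | rfl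
      · rcases hx12 with rfl | rfl
        · exact (hva rfl).elim
        · exact (hvb rfl).elim
      · exact hx12
    have hw2 : w = b ∨ w = d := by
      rcases hx21 with rfl | rfl
      · rcases hx22 with rfl | rfl
        · exact (hvb rfl).elim
        · exact (hvd rfl).elim
      · exact hx22
    have hw3 : w = a ∨ w = d := by
      rcases hx31 with rfl | rfl
      · exfalso
        obtain ⟨z, hz⟩ := Sym2.mem_iff_exists.1 hx32
        subst hz
        rw [Sym2.mem_iff] at haeb hdeb
        rcases haeb with h | h
        · exact hva h.symm
        · rcases hdeb with h' | h'
          · exact hvd h'.symm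
          · exact hd1 (h' ▸ h ▸ rfl)
      · obtain ⟨z, hz⟩ := Sym2.mem_iff_exists.1 hx32
        subst hz
        rw [Sym2.mem_iff] at haeb hdeb
        rcases haeb with h | h
        · exact Or.inl h.symm
        · rcases hdeb with h' | h'
          · exact Or.inr h'.symm
          · exact absurd (h'.trans h.symm) hd1
    rcases hw1 with rfl | rfl
    · rcases hw2 with h | h
      · exact hab h
      · exact hd1 h.symm
    · rcases hw3 with h | h
      · exact hab h.symm
      · exact hd2 h.symm
  -- choice functions
  set St : Finset (Fin k) := Finset.univ.filter (fun i => ∃ v, ∀ e ∈ Ei i, v ∈ e) with hSt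
  set center : Fin k → Fin (k+3) := fun i =>
    if h : ∃ v, ∀ e ∈ Ei i, v ∈ e then h.choose else ⟨0, by omega⟩ with hcenterdef
  set triV : Fin k → Finset (Fin (k+3)) := fun i =>
    if h : ∃ V : Finset (Fin (k+3)), V.card ≤ 3 ∧ ∀ e ∈ Ei i, ∀ v, v ∈ e → v ∈ V
    then h.choose else ∅ with htriVdef
  have hcenter : ∀ i ∈ St, ∀ e ∈ Ei i, center i ∈ e := by
    intro i hi e he
    rw [hSt, Finset.mem_filter] at hi
    rw [hcenterdef]
    simp only [dif_pos hi.2]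
    exact hi.2.choose_spec e he
  have htriV : ∀ i ∉ St, (triV i).card ≤ 3 ∧ (∀ e ∈ Ei i, ∀ v, v ∈ e → v ∈ triV i) := by
    intro i hi
    have hi' : ¬ ∃ v, ∀ e ∈ Ei i, v ∈ e := fun h =>
      hi (by rw [hSt]; exact Finset.mem_filter.2 ⟨Finset.mem_univ _, h⟩)
    have h2 := (hclass i).resolve_left hi'
    rw [htriVdef]
    simp only [dif_pos h2]
    exact h2.choose_spec
  set C : Finset (Fin (k+3)) := St.image center with hC
  have hCSt : C.card ≤ St.card := Finset.card_image_le
  have hStk : St.card ≤ k := le_trans (Finset.card_le_univ _) (by simp)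
  have hCk : C.card ≤ k := le_trans hCSt hStk
  set y := k - C.card with hy
  set VC : Finset (Fin (k+3)) := Finset.univ \ C with hVC
  have hVCcard : VC.card = y + 3 := by
    rw [hVC, Finset.card_sdiff_of_subset (Finset.subset_univ _), Finset.card_univ, Fintype.card_fin]
    omega
  set P := VC.offDiag.filter (fun p => s(p.1, p.2) ∉ D) with hP
  have hPfact : ∀ p ∈ P, s(p.1, p.2) ∈ Ei (c s(p.1, p.2)) ∧ p.1 ∉ C ∧ p.2 ∉ C ∧ p.1 ≠ p.2 := by
    intro p hp
    rw [hP, Finset.mem_filter, Finset.mem_offDiag] at hp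
    obtain ⟨⟨h1, h2, h3⟩, h4⟩ := hp
    rw [hVC, Finset.mem_sdiff] at h1 h2
    refine ⟨(hEimem _ _).2 ⟨rfl, ?_, h4⟩, h1.2, h2.2, h3⟩
    rw [Sym2.mk_isDiag_iff]
    exact h3
  have hstep : ∀ p ∈ P, c s(p.1, p.2) ∉ St ∧ p.1 ∈ triV (c s(p.1, p.2)) ∧
      p.2 ∈ triV (c s(p.1, p.2)) := by
    intro p hp
    obtain ⟨hEp, h1C, h2C, hne⟩ := hPfact p hp
    have hnSt : c s(p.1, p.2) ∉ St := by
      intro hmem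
      have hcen := hcenter _ hmem _ hEp
      have hcenC : center (c s(p.1, p.2)) ∈ C := by
        rw [hC]; exact Finset.mem_image_of_mem center hmem
      rw [Sym2.mem_iff] at hcen
      rcases hcen with h | h
      · exact h1C (h ▸ hcenC)
      · exact h2C (h ▸ hcenC)
    refine ⟨hnSt, ?_, ?_⟩
    · exact (htriV _ hnSt).2 _ hEp p.1 (Sym2.mem_mk_left _ _)
    · exact (htriV _ hnSt).2 _ hEp p.2 (Sym2.mem_mk_right _ _)
  set φ : Fin (k+3) × Fin (k+3) → Fin (k+3) × Fin k := fun p => (p.1, c s(p.1, p.2)) with hφ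
  have hPcard : P.card ≤ 2 * (P.image φ).card := by
    apply Finset.card_le_mul_card_image
    intro q hq
    obtain ⟨p0, hp0, hfp0⟩ := Finset.mem_image.1 hq
    have hq1 : p0.1 = q.1 := congrArg Prod.fst hfp0
    have hq2 : c s(p0.1, p0.2) = q.2 := congrArg Prod.snd hfp0
    have hnSt : q.2 ∉ St := hq2 ▸ (hstep p0 hp0).1
    have hq1tri : q.1 ∈ triV q.2 := by
      rw [← hq1, ← hq2]; exact (hstep p0 hp0).2.1
    refine le_trans (Finset.card_le_card_of_injOn (t := (triV q.2).erase q.1) Prod.snd ?_ ?_) ?_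
    · intro x hx
      rw [Finset.mem_coe, Finset.mem_filter] at hx; rw [Finset.mem_coe]
      obtain ⟨hxP, hxq⟩ := hx
      have hx1 : x.1 = q.1 := congrArg Prod.fst hxq
      have hx2 : c s(x.1, x.2) = q.2 := congrArg Prod.snd hxq
      refine Finset.mem_erase.2 ⟨?_, ?_⟩
      · rw [← hx1]; exact fun h => (hPfact x hxP).2.2.2 h.symm
      · rw [← hx2]; exact (hstep x hxP).2.2
    · intro x hx x' hx' hxx
      rw [Finset.mem_coe, Finset.mem_filter] at hx hx'
      have : x.1 = x'.1 := (congrArg Prod.fst hx.2).trans (congrArg Prod.fst hx'.2).symm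
      exact Prod.ext this hxx
    · rw [Finset.card_erase_of_mem hq1tri]
      have := (htriV _ hnSt).1
      omega
  have himg : (P.image φ).card ≤ 3 * (k - St.card) := by
    have hsub : P.image φ ⊆ Stᶜ.biUnion (fun i => (triV i).image (fun u => (u, i))) := by
      intro q hq
      obtain ⟨p0, hp0, hfp0⟩ := Finset.mem_image.1 hq
      rw [Finset.mem_biUnion]
      refine ⟨q.2, Finset.mem_compl.2 (hfp0 ▸ (hstep p0 hp0).1), ?_⟩
      rw [Finset.mem_image]
      exact ⟨q.1, by rw [← hfp0]; exact (hstep p0 hp0).2.1, by rw [← hfp0]⟩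
    refine le_trans (Finset.card_le_card hsub) (le_trans Finset.card_biUnion_le ?_)
    refine le_trans (Finset.sum_le_sum (fun i hi =>
      le_trans Finset.card_image_le ((htriV i (Finset.mem_compl.1 hi)).1))) ?_
    rw [Finset.sum_const, smul_eq_mul, Finset.card_compl, Fintype.card_fin, mul_comm]
  have hoff : VC.offDiag.card = (y+3) * (y+2) := by
    rw [Finset.offDiag_card, hVCcard]
    have : (y+3)*(y+3) = (y+3)*(y+2)+(y+3) := by ring
    omega
  have hsplit := Finset.card_filter_add_card_filter_not
    (s := VC.offDiag) (p := fun p => s(p.1, p.2) ∉ D)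
  set B := VC.offDiag.filter (fun p => ¬ s(p.1, p.2) ∉ D) with hB
  have hBcard : B.card ≤ 2 * D.card := by
    have h1 : B.card ≤ 2 * (B.image (fun p => s(p.1, p.2))).card := by
      apply Finset.card_le_mul_card_image
      intro e he
      induction e using Sym2.inductionOn with
      | _ x z =>
      refine le_trans (Finset.card_le_card
        (?_ : B.filter (fun p => s(p.1, p.2) = s(x, z)) ⊆ {(x, z), (z, x)})) ?_
      · intro p hp
        rw [Finset.mem_filter] at hp
        rw [Sym2.eq_iff] at hp
        rcases hp.2 with ⟨h1, h2⟩ | ⟨h1, h2⟩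
        · exact Finset.mem_insert.2 (Or.inl (Prod.ext h1 h2))
        · refine Finset.mem_insert.2 (Or.inr (Finset.mem_singleton.2 (Prod.ext h1 h2)))
      · exact le_trans (Finset.card_insert_le _ _) (by simp)
    refine le_trans h1 (Nat.mul_le_mul_left 2 (Finset.card_le_card ?_))
    intro e he
    obtain ⟨p, hp, rfl⟩ := Finset.mem_image.1 he
    rw [hB, Finset.mem_filter] at hp
    exact not_not.1 hp.2
  have hky : k - St.card ≤ y := by
    rw [hy]; exact Nat.sub_le_sub_left hCSt k
  have hfinal : (y+3) * (y+2) ≤ 6 * y + 4 := by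
    calc (y+3) * (y+2) = VC.offDiag.card := hoff.symm
    _ = P.card + B.card := hsplit.symm
    _ ≤ 2 * (P.image φ).card + 2 * D.card := Nat.add_le_add hPcard hBcard
    _ ≤ 2 * (3 * (k - St.card)) + 2 * 2 :=
        Nat.add_le_add (Nat.mul_le_mul_left 2 himg) (Nat.mul_le_mul_left 2 hDcard)
    _ ≤ 2 * (3 * y) + 4 := by
        have := Nat.mul_le_mul_left 3 hky
        omega
    _ = 6 * y + 4 := by ring
  nlinarith [sq_nonneg y]

section
variable {k : ℕ}

def v0 (hk : 6 ≤ k) : Fin (k+3) := ⟨k-1, by omega⟩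
def v1 (hk : 6 ≤ k) : Fin (k+3) := ⟨k, by omega⟩
def v2 (hk : 6 ≤ k) : Fin (k+3) := ⟨k+1, by omega⟩
def v3 (hk : 6 ≤ k) : Fin (k+3) := ⟨k+2, by omega⟩

lemma constr_mono_set (hk : 6 ≤ k) :
    {S | IsMonoCopy (nK2 2) (fcol k (k+3) (by omega)) S} =
      {{s(v0 hk, v1 hk), s(v2 hk, v3 hk)}, {s(v0 hk, v2 hk), s(v1 hk, v3 hk)},
       {s(v0 hk, v3 hk), s(v1 hk, v2 hk)}} := by
  ext S
  simp only [Set.mem_setOf_eq, mono_iff, Set.mem_insert_iff, Set.mem_singleton_iff]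
  constructor
  · rintro ⟨a, b, a', b', h1, h2, h3, h4, h5, h6, hc, rfl⟩
    exact pair_classify k hk a b a' b' _ _ _ _ rfl rfl rfl rfl (congrArg Fin.val hc)
      (fun h => h1 (Fin.ext h)) (fun h => h2 (Fin.ext h)) (fun h => h3 (Fin.ext h))
      (fun h => h4 (Fin.ext h)) (fun h => h5 (Fin.ext h)) (fun h => h6 (Fin.ext h))
  · have hne : ∀ (i j : ℕ) (hi : i < k+3) (hj : j < k+3), i ≠ j →
        (⟨i, hi⟩ : Fin (k+3)) ≠ ⟨j, hj⟩ := fun i j hi hj h hh => h (congrArg Fin.val hh)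
    rintro (rfl | rfl | rfl)
    · exact ⟨v0 hk, v1 hk, v2 hk, v3 hk, hne _ _ _ _ (by omega), hne _ _ _ _ (by omega),
        hne _ _ _ _ (by omega), hne _ _ _ _ (by omega), hne _ _ _ _ (by omega),
        hne _ _ _ _ (by omega), Fin.ext (by rw [fcol_mk, fcol_mk]; show min (min (k-1) k) _ = min (min (k+1) (k+2)) _ ; omega), rfl⟩
    · exact ⟨v0 hk, v2 hk, v1 hk, v3 hk, hne _ _ _ _ (by omega), hne _ _ _ _ (by omega),
        hne _ _ _ _ (by omega), hne _ _ _ _ (by omega), hne _ _ _ _ (by omega),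
        hne _ _ _ _ (by omega), Fin.ext (by rw [fcol_mk, fcol_mk]; show min (min (k-1) (k+1)) _ = min (min k (k+2)) _ ; omega), rfl⟩
    · exact ⟨v0 hk, v3 hk, v1 hk, v2 hk, hne _ _ _ _ (by omega), hne _ _ _ _ (by omega),
        hne _ _ _ _ (by omega), hne _ _ _ _ (by omega), hne _ _ _ _ (by omega),
        hne _ _ _ _ (by omega), Fin.ext (by rw [fcol_mk, fcol_mk]; show min (min (k-1) (k+2)) _ = min (min k (k+1)) _ ; omega), rfl⟩

lemma constr_surj (hk : 6 ≤ k) : Surjective (fcol k (k+3) (by omega : 0 < k)) := by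
  intro j
  refine ⟨s(⟨j.1, by omega⟩, v3 hk), Fin.ext ?_⟩
  rw [fcol_mk]
  have := j.2
  show min (min j.1 (k+2)) (k-1) = j.1
  omega

lemma constr_mono_count (hk : 6 ≤ k) :
    Set.ncard {S | IsMonoCopy (nK2 2) (fcol k (k+3) (by omega)) S} = 3 := by
  rw [constr_mono_set hk, Set.ncard_eq_three]
  refine ⟨_, _, _, ?_, ?_, ?_, rfl⟩
  · intro h
    have h1 : s(v0 hk, v1 hk) ∈ ({s(v0 hk, v2 hk), s(v1 hk, v3 hk)} : Set (Sym2 (Fin (k+3)))) := by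
      rw [← h]; simp
    simp only [Set.mem_insert_iff, Set.mem_singleton_iff, Sym2.eq_iff, Fin.ext_iff, v0, v1, v2, v3] at h1
    omega
  · intro h
    have h1 : s(v0 hk, v1 hk) ∈ ({s(v0 hk, v3 hk), s(v1 hk, v2 hk)} : Set (Sym2 (Fin (k+3)))) := by
      rw [← h]; simp
    simp only [Set.mem_insert_iff, Set.mem_singleton_iff, Sym2.eq_iff, Fin.ext_iff, v0, v1, v2, v3] at h1
    omega
  · intro h
    have h1 : s(v0 hk, v2 hk) ∈ ({s(v0 hk, v3 hk), s(v1 hk, v2 hk)} : Set (Sym2 (Fin (k+3)))) := by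
      rw [← h]; simp
    simp only [Set.mem_insert_iff, Set.mem_singleton_iff, Sym2.eq_iff, Fin.ext_iff, v0, v1, v2, v3] at h1
    omega
end

lemma constr_no_rainbow' {k : ℕ} (hk : 6 ≤ k) :
    rainbowCopyCount K3 (fcol k (k+3) (by omega)) = 0 := by
  unfold rainbowCopyCount
  have : {S | IsRainbowCopy K3 (fcol k (k+3) (by omega : 0 < k)) S} = ∅ :=
    Set.eq_empty_iff_forall_notMem.2 (fun S => constr_no_rainbow k (k+3) (by omega) S)
  rw [this, Set.ncard_empty]

lemma gr_eq (k : ℕ) (hk : 6 ≤ k) : gr k K3 (nK2 2) = k + 3 := by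
  have hmem : (k+3) ∈ {n | ∀ c : Sym2 (Fin n) → Fin k, HasRainbowCopy K3 c ∨ HasMonoCopy (nK2 2) c} := by
    intro c
    right
    have h3 := mono_ge_three k c
    have hne : {S | IsMonoCopy (nK2 2) c S}.Nonempty := by
      by_contra h
      rw [Set.not_nonempty_iff_eq_empty] at h
      rw [h, Set.ncard_empty] at h3
      omega
    exact hne
  refine le_antisymm (Nat.sInf_le hmem) (le_csInf ⟨_, hmem⟩ ?_)
  intro m hm
  by_contra hlt
  push_neg at hlt
  have hm2 : m ≤ k + 2 := by omega
  rcases hm (fcol k m (by omega)) with ⟨S, hS⟩ | ⟨S, hS⟩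
  · exact constr_no_rainbow k m (by omega) S hS
  · exact constr_no_mono k m (by omega) hm2 S hS

end GR

open GR in
/-- For `k ≥ 6`, the Gallai-Ramsey multiplicity `GM_k(K₃ : 2K₂)` equals `3`. -/
theorem GM_triangle_two_matching (k : ℕ) (hk : 6 ≤ k) :
    GM k K3 (nK2 2) = 3 := by
  have hgr := gr_eq k hk
  unfold GM
  rw [hgr]
  have hmem : (3:ℕ) ∈ {t | ∃ c : Sym2 (Fin (k+3)) → Fin k, Surjective c ∧
      t = rainbowCopyCount K3 c + monoCopyCount (nK2 2) c} := by
    refine ⟨fcol k (k+3) (by omega), constr_surj hk, ?_⟩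
    rw [constr_no_rainbow' hk]
    have := constr_mono_count hk
    unfold monoCopyCount
    omega
  refine le_antisymm (Nat.sInf_le hmem) (le_csInf ⟨_, hmem⟩ ?_)
  rintro t ⟨c, hc, rfl⟩
  have := mono_ge_three k c
  unfold monoCopyCount
  omega
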